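/- Let H be a Hopf algebra, A an associative (possibly nonunital) algebra with trivial right annihilator (r(A)=0), and let ·: H⊗A → A be a linear map. Define on the vector space A⊗H the multiplication (a#h)(b#k) = Σ a(h₁·b) # h₂k. Then this multiplication is associative if and only if h·(a(k·b)) = Σ (h₁·a)(h₂k·b) for all h,k ∈ H and a,b ∈ A. -/
import Mathlib


open TensorProduct

section PartialHopfPrelude

variable (k : Type) [Field k] (H : Type) [Ring H] [HopfAlgebra k H]

/-- Sweedler-style sum `Σ f h₁ h₂` over the comultiplication of `h`. -/
noncomputable def sweedler {M : Type} [AddCommGroup M] [Module k M]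
    (f : H →ₗ[k] H →ₗ[k] M) (h : H) : M :=
  TensorProduct.lift f (Coalgebra.comul h)

variable {A : Type} [AddCommGroup A] [Module k A]

/-- `Σ (h₁ · a) * (h₂ g · b)`, with an explicit multiplication `mA` on `A`. -/
noncomputable def paRhs (mA : A →ₗ[k] A →ₗ[k] A) (act : H →ₗ[k] A →ₗ[k] A)
    (h g : H) (a b : A) : A :=
  sweedler k H ((mA.comp (act.flip a)).compl₂ ((act.flip b).comp (LinearMap.mulRight k g))) h

/-- `Σ (h₁ g · b) * (h₂ · a)`, with an explicit multiplication `mA` on `A`. -/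
noncomputable def paSymmRhs (mA : A →ₗ[k] A →ₗ[k] A) (act : H →ₗ[k] A →ₗ[k] A)
    (h g : H) (a b : A) : A :=
  sweedler k H ((mA.comp ((act.flip b).comp (LinearMap.mulRight k g))).compl₂ (act.flip a)) h

/-- A (left) partial action of the Hopf algebra `H` on `A`, where the (possibly nonunital,
possibly nonassociative) multiplication of `A` is given explicitly as a bilinear map `mA`:
`1_H · a = a` and `h · (a (g · b)) = Σ (h₁ · a)(h₂ g · b)`. -/
structure IsPartialActionOn (mA : A →ₗ[k] A →ₗ[k] A) (act : H →ₗ[k] A →ₗ[k] A) : Prop where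
  one_act : ∀ a : A, act 1 a = a
  act_assoc : ∀ (h g : H) (a b : A), act h (mA a (act g b)) = paRhs k H mA act h g a b

/-- A symmetrical partial action: additionally `h · ((g · b) a) = Σ (h₁ g · b)(h₂ · a)`. -/
structure IsSymmPartialActionOn (mA : A →ₗ[k] A →ₗ[k] A) (act : H →ₗ[k] A →ₗ[k] A)
    extends IsPartialActionOn k H mA act : Prop where
  act_symm : ∀ (h g : H) (a b : A), act h (mA (act g b) a) = paSymmRhs k H mA act h g a b

variable {B : Type} [NonUnitalRing B] [Module k B] [SMulCommClass k B B] [IsScalarTower k B B]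

/-- A partial action of `H` on the nonunital algebra `B` (with its own multiplication). -/
def IsPartialAction (act : H →ₗ[k] B →ₗ[k] B) : Prop :=
  IsPartialActionOn k H (LinearMap.mul k B) act

/-- A symmetrical partial action of `H` on the nonunital algebra `B`. -/
def IsSymmPartialAction (act : H →ₗ[k] B →ₗ[k] B) : Prop :=
  IsSymmPartialActionOn k H (LinearMap.mul k B) act

end PartialHopfPrelude

section Stmt0

variable {k : Type} [Field k] {H : Type} [Ring H] [HopfAlgebra k H]
variable {A : Type} [NonUnitalRing A] [Module k A] [SMulCommClass k A A] [IsScalarTower k A A]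

/-- `Σ a (h₁ · b) ⊗ (h₂ g)`, the defining formula for the smash product multiplication on
`A ⊗ H` on elementary tensors. -/
noncomputable def smashAux (act : H →ₗ[k] A →ₗ[k] A) (a : A) (h : H) (b : A) (g : H) :
    A ⊗[k] H :=
  TensorProduct.map ((LinearMap.mulLeft k a).comp (act.flip b)) (LinearMap.mulRight k g)
    (Coalgebra.comul h)


set_option synthInstance.maxHeartbeats 1000000
set_option maxHeartbeats 1000000

section SmashHelpers

variable {k : Type} [Field k] {H : Type} [Ring H] [HopfAlgebra k H]
variable {A : Type} [NonUnitalRing A] [Module k A] [SMulCommClass k A A] [IsScalarTower k A A]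

/-- Collapse the right `H` tensor factor with the counit: `m ⊗ q ↦ ε(q) • m`. -/
noncomputable def epsR (M : Type) [AddCommGroup M] [Module k M] : M ⊗[k] H →ₗ[k] M :=
  (TensorProduct.rid k M).toLinearMap ∘ₗ
    LinearMap.lTensor M (Coalgebra.counit (R := k) (A := H))

@[simp] lemma epsR_tmul (M : Type) [AddCommGroup M] [Module k M] (m : M) (q : H) :
    epsR (k := k) (H := H) M (m ⊗ₜ[k] q) = Coalgebra.counit (R := k) q • m := by
  simp [epsR]

lemma epsR_comul (v : H) : epsR (k := k) (H := H) H (Coalgebra.comul v) = v := by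
  simp [epsR, Coalgebra.lTensor_counit_comul]

lemma epsR_map (act : H →ₗ[k] A →ₗ[k] A) (a₀ c : A) (l : H) (w : H ⊗[k] H) :
    epsR (k := k) (H := H) A
      (TensorProduct.map ((LinearMap.mulLeft k a₀) ∘ₗ act.flip c) (LinearMap.mulRight k l) w)
      = Coalgebra.counit (R := k) l • (a₀ * act (epsR (k := k) (H := H) H w) c) := by
  induction w using TensorProduct.induction_on with
  | zero => simp
  | tmul p q =>
      simp [mul_smul_comm, smul_smul, mul_comm]
  | add x y hx hy => simp [map_add, hx, hy, mul_add, smul_add]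

lemma phi_mu_right (act : H →ₗ[k] A →ₗ[k] A)
    (μ : (A ⊗[k] H) →ₗ[k] (A ⊗[k] H) →ₗ[k] (A ⊗[k] H))
    (hμ : ∀ (a : A) (h : H) (b : A) (g : H),
      μ (a ⊗ₜ[k] h) (b ⊗ₜ[k] g) = smashAux act a h b g)
    (c : A) (w : A ⊗[k] H) :
    epsR (k := k) (H := H) A (μ w (c ⊗ₜ[k] (1 : H))) =
      TensorProduct.lift ((LinearMap.mul k A).compl₂ (act.flip c)) w := by
  induction w using TensorProduct.induction_on with
  | zero => simp
  | tmul u v =>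
      rw [hμ]
      unfold smashAux
      rw [epsR_map act u c 1 (Coalgebra.comul v)]
      simp [epsR_comul]
  | add x y hx hy => simp [map_add, hx, hy]

lemma phi_mu_left (act : H →ₗ[k] A →ₗ[k] A)
    (μ : (A ⊗[k] H) →ₗ[k] (A ⊗[k] H) →ₗ[k] (A ⊗[k] H))
    (hμ : ∀ (a : A) (h : H) (b : A) (g : H),
      μ (a ⊗ₜ[k] h) (b ⊗ₜ[k] g) = smashAux act a h b g)
    (a₀ : A) (h' : H) (w : A ⊗[k] H) :
    epsR (k := k) (H := H) A (μ (a₀ ⊗ₜ[k] h') w) = a₀ * act h' (epsR (k := k) (H := H) A w) := by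
  induction w using TensorProduct.induction_on with
  | zero => simp
  | tmul c l =>
      rw [hμ]
      unfold smashAux
      rw [epsR_map act a₀ c l (Coalgebra.comul h')]
      simp [epsR_comul, mul_smul_comm]
  | add x y hx hy => simp [map_add, hx, hy, mul_add]

lemma lift_smashAux_eq (act : H →ₗ[k] A →ₗ[k] A) (a₀ a b : A) (g : H) (w : H ⊗[k] H) :
    TensorProduct.lift ((LinearMap.mul k A).compl₂ (act.flip b))
      (TensorProduct.map ((LinearMap.mulLeft k a₀) ∘ₗ act.flip a) (LinearMap.mulRight k g) w)
      = a₀ * TensorProduct.lift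
          (((LinearMap.mul k A).comp (act.flip a)).compl₂
            ((act.flip b).comp (LinearMap.mulRight k g))) w := by
  induction w using TensorProduct.induction_on with
  | zero => simp
  | tmul p q => simp [mul_assoc]
  | add x y hx hy => simp [map_add, hx, hy, mul_add]

/-- Auxiliary map for the backward direction: on elementary tensors,
`Theta act a b c l G (x ⊗ (p ⊗ q)) = Σ (a (x·b)) ((p G₁)·c) ⊗ q G₂ l` informally. -/
noncomputable def Theta (act : H →ₗ[k] A →ₗ[k] A) (a b c : A) (l : H) (G : H ⊗[k] H) :
    (H ⊗[k] (H ⊗[k] H)) →ₗ[k] (A ⊗[k] H) :=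
  (TensorProduct.map (TensorProduct.lift ((LinearMap.mul k A).compl₂ (act.flip c)))
      (LinearMap.mulRight k l)) ∘ₗ
    (TensorProduct.assoc k A H H).symm.toLinearMap ∘ₗ
      (TensorProduct.map ((LinearMap.mulLeft k a) ∘ₗ act.flip b) (LinearMap.mulRight k G))

lemma Theta_zero (act : H →ₗ[k] A →ₗ[k] A) (a b c : A) (l : H) :
    Theta (k := k) act a b c l (0 : H ⊗[k] H) = 0 := by
  unfold Theta
  rw [LinearMap.mulRight_zero_eq_zero]
  ext x w
  simp

lemma Theta_add (act : H →ₗ[k] A →ₗ[k] A) (a b c : A) (l : H) (G₁ G₂ : H ⊗[k] H) :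
    Theta (k := k) act a b c l (G₁ + G₂)
      = Theta (k := k) act a b c l G₁ + Theta (k := k) act a b c l G₂ := by
  unfold Theta
  have : LinearMap.mulRight k (G₁ + G₂)
      = LinearMap.mulRight k G₁ + LinearMap.mulRight k G₂ := by
    ext x; simp [mul_add]
  rw [this, TensorProduct.map_add_right]
  ext x w
  simp

lemma map_mul_eq_theta (act : H →ₗ[k] A →ₗ[k] A) (a b c : A) (l : H)
    (u' : A) (w' : H ⊗[k] H) :
    TensorProduct.map ((LinearMap.mulLeft k u') ∘ₗ act.flip c) (LinearMap.mulRight k l) w'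
      = TensorProduct.map (TensorProduct.lift ((LinearMap.mul k A).compl₂ (act.flip c)))
          (LinearMap.mulRight k l) ((TensorProduct.assoc k A H H).symm (u' ⊗ₜ[k] w')) := by
  induction w' using TensorProduct.induction_on with
  | zero => rw [tmul_zero, LinearEquiv.map_zero]; simp
  | tmul s t =>
      rw [TensorProduct.assoc_symm_tmul]
      simp
  | add x y hx hy => rw [tmul_add, LinearEquiv.map_add, map_add, map_add, hx, hy]

lemma theta_elem (act : H →ₗ[k] A →ₗ[k] A) (a b c : A) (l : H) (u' v' z : H)
    (wx : H ⊗[k] H) :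
    (a * TensorProduct.lift (((LinearMap.mul k A).comp (act.flip b)).compl₂
        ((act.flip c).comp (LinearMap.mulRight k u'))) wx) ⊗ₜ[k] (z * (v' * l))
      = Theta (k := k) act a b c l (u' ⊗ₜ[k] v')
          ((TensorProduct.assoc k H H H) (wx ⊗ₜ[k] z)) := by
  induction wx using TensorProduct.induction_on with
  | zero => simp only [zero_tmul, map_zero, mul_zero, LinearEquiv.map_zero]
  | tmul p q =>
      rw [TensorProduct.assoc_tmul]
      unfold Theta
      simp [Algebra.TensorProduct.tmul_mul_tmul, mul_assoc]
  | add x y hx hy =>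
      simp only [add_tmul, mul_add, map_add, LinearEquiv.map_add, hx, hy]

lemma smash_to_theta (act : H →ₗ[k] A →ₗ[k] A) (a b c : A) (l : H)
    (hax : ∀ (h g : H) (a b : A),
      act h (a * act g b) = paRhs k H (LinearMap.mul k A) act h g a b)
    (u' v' : H) (w : H ⊗[k] H) :
    TensorProduct.map ((LinearMap.mulLeft k a) ∘ₗ act.flip (b * act u' c))
        (LinearMap.mulRight k (v' * l)) w
      = Theta (k := k) act a b c l (u' ⊗ₜ[k] v')
          ((TensorProduct.assoc k H H H) (LinearMap.rTensor H Coalgebra.comul w)) := by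
  induction w using TensorProduct.induction_on with
  | zero => simp only [map_zero, LinearEquiv.map_zero]
  | tmul x z =>
      rw [TensorProduct.map_tmul, LinearMap.rTensor_tmul]
      have hx : ((LinearMap.mulLeft k a) ∘ₗ act.flip (b * act u' c)) x
          = a * TensorProduct.lift (((LinearMap.mul k A).comp (act.flip b)).compl₂
              ((act.flip c).comp (LinearMap.mulRight k u'))) (Coalgebra.comul x) := by
        have := hax x u' b c
        unfold paRhs sweedler at this
        simp [this]
      rw [hx]
      have hz : LinearMap.mulRight k (v' * l) z = z * (v' * l) := rfl
      rw [hz, theta_elem]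
  | add x y hx hy =>
      simp only [map_add, LinearEquiv.map_add, hx, hy]

lemma mu_smash_left (act : H →ₗ[k] A →ₗ[k] A)
    (μ : (A ⊗[k] H) →ₗ[k] (A ⊗[k] H) →ₗ[k] (A ⊗[k] H))
    (hμ : ∀ (a : A) (h : H) (b : A) (g : H),
      μ (a ⊗ₜ[k] h) (b ⊗ₜ[k] g) = smashAux act a h b g)
    (a b c : A) (g l : H) (w : H ⊗[k] H) :
    μ (TensorProduct.map ((LinearMap.mulLeft k a) ∘ₗ act.flip b)
        (LinearMap.mulRight k g) w) (c ⊗ₜ[k] l)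
      = Theta (k := k) act a b c l (Coalgebra.comul g)
          (LinearMap.lTensor H Coalgebra.comul w) := by
  induction w using TensorProduct.induction_on with
  | zero => simp
  | tmul u v =>
      rw [TensorProduct.map_tmul, LinearMap.lTensor_tmul, hμ]
      unfold smashAux
      have : LinearMap.mulRight k g v = v * g := rfl
      rw [this, Bialgebra.comul_mul,
        map_mul_eq_theta act (a := a) (b := b) c l
          (((LinearMap.mulLeft k a) ∘ₗ act.flip b) u)
          (Coalgebra.comul v * Coalgebra.comul g)]
      unfold Theta
      simp
  | add x y hx hy =>
      simp only [map_add, LinearMap.add_apply, hx, hy]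

lemma mu_smash_right (act : H →ₗ[k] A →ₗ[k] A)
    (μ : (A ⊗[k] H) →ₗ[k] (A ⊗[k] H) →ₗ[k] (A ⊗[k] H))
    (hμ : ∀ (a : A) (h : H) (b : A) (g : H),
      μ (a ⊗ₜ[k] h) (b ⊗ₜ[k] g) = smashAux act a h b g)
    (hax : ∀ (h g : H) (a b : A),
      act h (a * act g b) = paRhs k H (LinearMap.mul k A) act h g a b)
    (a b c : A) (h l : H) (G : H ⊗[k] H) :
    μ (a ⊗ₜ[k] h) (TensorProduct.map ((LinearMap.mulLeft k b) ∘ₗ act.flip c)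
        (LinearMap.mulRight k l) G)
      = Theta (k := k) act a b c l G
          ((TensorProduct.assoc k H H H)
            (LinearMap.rTensor H Coalgebra.comul (Coalgebra.comul h))) := by
  induction G using TensorProduct.induction_on with
  | zero => rw [map_zero, map_zero, Theta_zero]; simp
  | tmul u' v' =>
      rw [TensorProduct.map_tmul, hμ]
      unfold smashAux
      have h1 : ((LinearMap.mulLeft k b) ∘ₗ act.flip c) u' = b * act u' c := rfl
      have h2 : LinearMap.mulRight k l v' = v' * l := rfl
      rw [h1, h2, smash_to_theta act a b c l hax u' v' (Coalgebra.comul h)]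
  | add x y hx hy =>
      rw [map_add, map_add, hx, hy, Theta_add]
      simp

end SmashHelpers

/-- Let `H` be a Hopf algebra, `A` an associative (possibly nonunital)
algebra with trivial right annihilator, and `act : H ⊗ A → A` a linear map.  The smash
product multiplication `(a # h)(b # g) = Σ a (h₁ · b) # h₂ g` on `A ⊗ H` is associative
if and only if `h · (a (g · b)) = Σ (h₁ · a)(h₂ g · b)` for all `h, g ∈ H`, `a, b ∈ A`. -/
theorem smash_product_assoc_iff_partial_action_axiom
    (act : H →ₗ[k] A →ₗ[k] A)
    (hr : ∀ a : A, (∀ b : A, b * a = 0) → a = 0)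
    (μ : (A ⊗[k] H) →ₗ[k] (A ⊗[k] H) →ₗ[k] (A ⊗[k] H))
    (hμ : ∀ (a : A) (h : H) (b : A) (g : H),
      μ (a ⊗ₜ[k] h) (b ⊗ₜ[k] g) = smashAux act a h b g) :
    (∀ x y z : A ⊗[k] H, μ (μ x y) z = μ x (μ y z)) ↔
      (∀ (h g : H) (a b : A),
        act h (a * act g b) = paRhs k H (LinearMap.mul k A) act h g a b) := by
  constructor
  · -- associativity implies the partial action axiom
    intro hassoc h g a b
    have key : ∀ a₀ : A, a₀ * act h (a * act g b)
        = a₀ * paRhs k H (LinearMap.mul k A) act h g a b := by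
      intro a₀
      have e := congrArg (epsR (k := k) (H := H) A)
        (hassoc (a₀ ⊗ₜ[k] h) (a ⊗ₜ[k] g) (b ⊗ₜ[k] (1 : H)))
      rw [phi_mu_right act μ hμ b, phi_mu_left act μ hμ a₀ h,
        phi_mu_right act μ hμ b, hμ] at e
      unfold smashAux at e
      rw [lift_smashAux_eq] at e
      unfold paRhs sweedler
      rw [e]
      simp
    have h0 := hr (act h (a * act g b) - paRhs k H (LinearMap.mul k A) act h g a b)
      (fun a₀ => by rw [mul_sub, key a₀, sub_self])
    exact sub_eq_zero.mp h0
  · -- the partial action axiom implies associativity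
    intro hax x y z
    induction x using TensorProduct.induction_on with
    | zero => simp
    | add x₁ x₂ h₁ h₂ => simp [map_add, LinearMap.add_apply, h₁, h₂]
    | tmul a h =>
      induction y using TensorProduct.induction_on with
      | zero => simp
      | add y₁ y₂ h₁ h₂ => simp [map_add, LinearMap.add_apply, h₁, h₂]
      | tmul b g =>
        induction z using TensorProduct.induction_on with
        | zero => simp
        | add z₁ z₂ h₁ h₂ => simp [map_add, h₁, h₂]
        | tmul c l =>
          rw [hμ a h b g, hμ b g c l]
          unfold smashAux
          rw [mu_smash_left act μ hμ a b c g l (Coalgebra.comul h),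
            mu_smash_right act μ hμ hax a b c h l (Coalgebra.comul g),
            Coalgebra.coassoc_apply]


end Stmt0
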